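/- Given a cube of integers (a,b,c,d,e,f,g,h), define Q1(x,y) = (be-af)x^2 + (bg+de-ah-cf)xy + (dg-ch)y^2, Q2(x,y) = (ce-ag)x^2 + (cf+de-ah-bg)xy + (df-bh)y^2, Q3(x,y) = (bc-ad)x^2 + (bg+cf-ah-de)xy + (fg-eh)y^2. Then Q1, Q2, Q3 all have the same discriminant. -/
import Mathlib


/-- The three quadratic forms attached to a Bhargava cube (a,b,c,d,e,f,g,h)
all have the same discriminant. -/
theorem stmt_2 (a b c d e f g h : ℤ) :
    (b * g + d * e - a * h - c * f) ^ 2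
        - 4 * (b * e - a * f) * (d * g - c * h)
      = (c * f + d * e - a * h - b * g) ^ 2
        - 4 * (c * e - a * g) * (d * f - b * h) ∧
    (c * f + d * e - a * h - b * g) ^ 2
        - 4 * (c * e - a * g) * (d * f - b * h)
      = (b * g + c * f - a * h - d * e) ^ 2
        - 4 * (b * c - a * d) * (f * g - e * h) := by
  constructor <;> ring
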